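/- Scalar version of Proposition 1: for y ∈ ℝ^N, z ∈ ℝ^N with z ≠ 0, the unique minimizer over x ∈ ℝ^N of |x'z| + (1/2)‖x−y‖₂² is x̂ = y − g·z where g = sign(y'z)·min(|y'z|/‖z‖₂², 1); moreover x̂'z = y'z − g‖z‖₂². -/

import Mathlib

open Matrix

lemma oned_lt (Z s t g : ℝ) (hZ : 0 < Z)
    (hg : g = Real.sign s * min (|s| / Z) 1)
    (ht : t ≠ -(g * Z)) :
    |s - g * Z| + g ^ 2 * Z / 2 < |s + t| + t ^ 2 / (2 * Z) := by
  have h2Z : (0:ℝ) < 2 * Z := by linarith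
  by_cases h : |s| ≤ Z
  · have hmin : min (|s| / Z) 1 = |s| / Z := min_eq_left (by rwa [div_le_one hZ])
    have hgZ : g * Z = s := by
      rw [hg, hmin, mul_assoc, div_mul_cancel₀ _ hZ.ne']
      rcases lt_trichotomy s 0 with hs | hs | hs
      · rw [Real.sign_of_neg hs, abs_of_neg hs]; ring
      · simp [hs]
      · rw [Real.sign_of_pos hs, abs_of_pos hs]; ring
    have hgval : g = s / Z := by field_simp [eq_div_iff hZ.ne', hgZ]; exact hgZ
    have hst : s + t ≠ 0 := by
      intro h0
      apply ht
      rw [hgZ]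
      linarith
    have key : (s + t) * s ≤ |s + t| * Z := by
      calc (s + t) * s ≤ |(s + t) * s| := le_abs_self _
        _ = |s + t| * |s| := abs_mul _ _
        _ ≤ |s + t| * Z := by
            exact mul_le_mul_of_nonneg_left h (abs_nonneg _)
    have hpos : 0 < (s + t) ^ 2 := by positivity
    have hrw1 : |s - g * Z| = 0 := by rw [hgZ]; simp
    have hrw2 : g ^ 2 * Z / 2 = s ^ 2 / (2 * Z) := by
      rw [hgval]; field_simp
    rw [hrw1, hrw2, zero_add]
    rw [div_lt_iff₀ h2Z, add_mul, div_mul_cancel₀ _ h2Z.ne']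
    nlinarith [key, hpos]
  · push_neg at h
    have hmin : min (|s| / Z) 1 = 1 := min_eq_right (by rw [le_div_iff₀ hZ]; linarith)
    have hs0 : s ≠ 0 := by
      intro h0; rw [h0, abs_zero] at h; linarith
    rcases lt_or_gt_of_ne hs0 with hs | hs
    · have hsgn : Real.sign s = -1 := Real.sign_of_neg hs
      have hgv : g = -1 := by rw [hg, hsgn, hmin]; ring
      have habs : |s| = -s := abs_of_neg hs
      have hsZ : s < -Z := by rw [habs] at h; linarith
      have hrw1 : |s - g * Z| = -s - Z := by
        rw [hgv]; rw [abs_of_neg (by linarith : s - (-1) * Z < 0)]; ring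
      have h1 : -(s + t) ≤ |s + t| := neg_le_abs _
      have htZ : t ≠ Z := by
        intro h0; apply ht; rw [hgv, h0]; ring
      have h2 : 0 < (t - Z) ^ 2 := by
        have := sub_ne_zero.mpr htZ; positivity
      have h3 : t - Z / 2 < t ^ 2 / (2 * Z) := by
        rw [lt_div_iff₀ h2Z]; nlinarith [h2]
      rw [hrw1, hgv]
      nlinarith [h1, h3]
    · have hsgn : Real.sign s = 1 := Real.sign_of_pos hs
      have hgv : g = 1 := by rw [hg, hsgn, hmin]; ring
      have habs : |s| = s := abs_of_pos hs
      have hsZ : Z < s := by rwa [habs] at h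
      have hrw1 : |s - g * Z| = s - Z := by
        rw [hgv]; rw [abs_of_pos (by linarith : (0:ℝ) < s - 1 * Z)]; ring
      have h1 : s + t ≤ |s + t| := le_abs_self _
      have htZ : t + Z ≠ 0 := by
        intro h0; apply ht; rw [hgv]; linarith
      have h2 : 0 < (t + Z) ^ 2 := by positivity
      have h3 : -t - Z / 2 < t ^ 2 / (2 * Z) := by
        rw [lt_div_iff₀ h2Z]; nlinarith [h2]
      rw [hrw1, hgv]
      nlinarith [h1, h3]

theorem prop1_ell1_prox_vector {N : ℕ}
    (y z : Fin N → ℝ) (hz : z ≠ 0) :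
    let g : ℝ := Real.sign (y ⬝ᵥ z) * min (|y ⬝ᵥ z| / (∑ j, z j ^ 2)) 1
    let xhat : Fin N → ℝ := y - g • z
    (∀ x : Fin N → ℝ, x ≠ xhat →
      |xhat ⬝ᵥ z| + (1 / 2) * (∑ j, (xhat j - y j) ^ 2) <
        |x ⬝ᵥ z| + (1 / 2) * (∑ j, (x j - y j) ^ 2)) ∧
      xhat ⬝ᵥ z = y ⬝ᵥ z - g * (∑ j, z j ^ 2) := by
  intro g xhat
  have hgdef : g = Real.sign (y ⬝ᵥ z) * min (|y ⬝ᵥ z| / (∑ j, z j ^ 2)) 1 := rfl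
  have hxhat : ∀ j, xhat j = y j - g * z j := by
    intro j; simp [xhat]
  set s := y ⬝ᵥ z with hsdef
  set Z := ∑ j, z j ^ 2 with hZdef
  have hZ : 0 < Z := by
    obtain ⟨j, hj⟩ := Function.ne_iff.mp hz
    have hj' : z j ≠ 0 := hj
    exact Finset.sum_pos' (fun i _ => sq_nonneg _) ⟨j, Finset.mem_univ j, by positivity⟩
  have hzz : z ⬝ᵥ z = Z := by simp [dotProduct, hZdef, sq]
  have part2 : xhat ⬝ᵥ z = s - g * Z := by
    show (y - g • z) ⬝ᵥ z = s - g * Z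
    rw [sub_dotProduct, smul_dotProduct, hzz, ← hsdef, smul_eq_mul]
  refine ⟨?_, part2⟩
  intro x hx
  set t := x ⬝ᵥ z - s with htdef
  have hxz : x ⬝ᵥ z = s + t := by rw [htdef]; ring
  have ht' : ∑ j, (x j - y j) * z j = t := by
    rw [htdef, hsdef]
    simp [dotProduct, sub_mul, Finset.sum_sub_distrib]
  have hsum : ∑ j, (x j - y j) ^ 2
      = (∑ j, (x j - y j - (t / Z) * z j) ^ 2) + t ^ 2 / Z := by
    have expand : ∑ j, (x j - y j - (t / Z) * z j) ^ 2
        = (∑ j, (x j - y j) ^ 2) - 2 * (t / Z) * (∑ j, (x j - y j) * z j)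
          + (t / Z) ^ 2 * (∑ j, z j ^ 2) := by
      rw [Finset.mul_sum, Finset.mul_sum, ← Finset.sum_sub_distrib, ← Finset.sum_add_distrib]
      exact Finset.sum_congr rfl fun j _ => by ring
    rw [expand, ht', ← hZdef]
    field_simp
    ring
  have hxhatsum : ∑ j, (xhat j - y j) ^ 2 = g ^ 2 * Z := by
    rw [hZdef, Finset.mul_sum]
    exact Finset.sum_congr rfl fun j _ => by rw [hxhat j]; ring
  have hVnn : 0 ≤ ∑ j, (x j - y j - (t / Z) * z j) ^ 2 :=
    Finset.sum_nonneg fun j _ => sq_nonneg _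
  rw [part2, hxhatsum, hxz, hsum]
  by_cases ht : t = -(g * Z)
  · have hVpos : 0 < ∑ j, (x j - y j - (t / Z) * z j) ^ 2 := by
      rcases hVnn.lt_or_eq with h | h
      · exact h
      · exfalso
        apply hx
        funext j
        have hj := (Finset.sum_eq_zero_iff_of_nonneg (fun i _ => sq_nonneg _)).mp h.symm j (Finset.mem_univ j)
        have hj' : x j - y j - (t / Z) * z j = 0 := by
          exact pow_eq_zero_iff (by norm_num) |>.mp hj
        have htZ : t / Z = -g := by rw [ht]; field_simp
        rw [hxhat j]
        rw [htZ] at hj'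
        linarith
    have habs : |s + t| = |s - g * Z| := by rw [ht]; ring_nf
    have ht2 : t ^ 2 / Z = g ^ 2 * Z := by rw [ht]; field_simp
    rw [habs, ht2]
    linarith
  · have key := oned_lt Z s t g hZ hgdef ht
    have hhalf : t ^ 2 / (2 * Z) = 1 / 2 * (t ^ 2 / Z) := by ring
    rw [hhalf] at key
    linarith
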